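/- Let q, a, b, c, d, x ∈ ℂ with 0 < |q| < 1, x ≠ 0, and let k ≤ n be natural numbers. Assume 1 - a q^j x ≠ 0 and 1 - b q^j x ≠ 0 for 0 ≤ j ≤ k - 1, and 1 - c q^j x ≠ 0 and 1 - d q^j x ≠ 0 for 0 ≤ j ≤ n + k - 1. Then the k-th iterate of the q-differential operator applied to t ↦ (a t;q)_n (b t;q)_n / ((c t;q)_n (d t;q)_n), evaluated at x, equals (q;q)_n^2 (a x;q)_n (b x;q)_n · ∑_{i=0}^{k} [k choose i]_q (q^{C(i,2)}/(b x;q)_i) · ( ∑_{j=0}^{i} [i choose j]_q q^{j(j-i)} (-a)^j (-b)^{i-j} (b q^n x;q)_j / ((q;q)_{n-j} (q;q)_{n-i+j} (a x;q)_j) ) · (1/((c q^i x;q)_n (d q^i x;q)_n (d q^{n+i} x;q)_{k-i})) · ∑_{l=0}^{k-i} [k-i choose l]_q (q^n;q)_l (q^n;q)_{k-i-l} (d q^i x;q)_l c^l d^{k-i-l} / (c q^{n+i} x;q)_l. -/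

import Mathlib

/-- The finite q-shifted factorial (a;q)_n = ∏_{j=0}^{n-1} (1 - a q^j). -/
noncomputable def qPoch (q a : ℂ) (n : ℕ) : ℂ :=
  ∏ j ∈ Finset.range n, (1 - a * q ^ j)

/-- The q-binomial coefficient [n choose k]_q = (q;q)_n / ((q;q)_k (q;q)_{n-k}). -/
noncomputable def qBinom (q : ℂ) (n k : ℕ) : ℂ :=
  qPoch q q n / (qPoch q q k * qPoch q q (n - k))

/-- The q-differential operator: (D_q f)(x) = (f(x) - f(qx))/x. -/
noncomputable def Dq (q : ℂ) (f : ℂ → ℂ) : ℂ → ℂ :=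
  fun x => (f x - f (q * x)) / x

lemma qPoch_zero (q a : ℂ) : qPoch q a 0 = 1 := by simp [qPoch]

lemma qPoch_succ (q a : ℂ) (n : ℕ) : qPoch q a (n+1) = qPoch q a n * (1 - a * q ^ n) := by
  simp [qPoch, Finset.prod_range_succ]

lemma qPoch_succ' (q a : ℂ) (n : ℕ) : qPoch q a (n+1) = (1 - a) * qPoch q (a*q) n := by
  rw [qPoch, Finset.prod_range_succ', mul_comm]
  simp only [pow_zero, mul_one]
  rw [qPoch]
  congr 1
  refine Finset.prod_congr rfl fun j _ => ?_
  ring_nf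

lemma qPoch_add (q a : ℂ) (m n : ℕ) :
    qPoch q a (m + n) = qPoch q a m * qPoch q (a * q ^ m) n := by
  simp only [qPoch, Finset.prod_range_add]
  congr 1
  apply Finset.prod_congr rfl
  intro j _
  rw [pow_add]; ring_nf

lemma qPoch_ne_zero {q a : ℂ} {n : ℕ} (h : ∀ j < n, 1 - a * q ^ j ≠ 0) :
    qPoch q a n ≠ 0 := by
  rw [qPoch, Finset.prod_ne_zero_iff]
  intro j hj
  exact h j (Finset.mem_range.mp hj)

lemma qq_ne_zero {q : ℂ} (hq1 : ‖q‖ < 1) (m : ℕ) : qPoch q q m ≠ 0 := by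
  apply qPoch_ne_zero
  intro j _
  intro h
  have h1 : q * q ^ j = 1 := by linear_combination -h
  have : ‖q * q ^ j‖ < 1 := by
    rw [norm_mul, norm_pow]
    calc ‖q‖ * ‖q‖ ^ j ≤ ‖q‖ * 1 := by
          apply mul_le_mul_of_nonneg_left _ (norm_nonneg q)
          exact pow_le_one₀ (norm_nonneg q) hq1.le
      _ < 1 := by simpa using hq1
  rw [h1] at this; simp at this

lemma qBinom_zero {q : ℂ} (hq1 : ‖q‖ < 1) (m : ℕ) : qBinom q m 0 = 1 := by
  simp [qBinom, qPoch_zero, div_self (qq_ne_zero hq1 m)]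

lemma qBinom_self {q : ℂ} (hq1 : ‖q‖ < 1) (m : ℕ) : qBinom q m m = 1 := by
  simp [qBinom, qPoch_zero, div_self (qq_ne_zero hq1 m)]

lemma choose2_succ (n : ℕ) : (n+1).choose 2 = n.choose 2 + n := by
  rw [Nat.choose_succ_succ]
  simp [Nat.choose_one_right, Nat.add_comm]

lemma choose2_add (j m : ℕ) : (j+m).choose 2 = j.choose 2 + m.choose 2 + j * m := by
  induction m with
  | zero => simp
  | succ m ih =>
    rw [← Nat.add_assoc, choose2_succ, ih, choose2_succ]
    ring

lemma qBinom_pascal {q : ℂ} (hq1 : ‖q‖ < 1) (k i : ℕ) (h1 : 1 ≤ i) (h2 : i ≤ k) :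
    qBinom q (k+1) i = qBinom q k (i-1) + q ^ i * qBinom q k i := by
  obtain ⟨j, rfl⟩ := Nat.exists_eq_add_of_le h1
  obtain ⟨m, rfl⟩ := Nat.exists_eq_add_of_le h2
  simp only [qBinom]
  have e1 : 1 + j + m + 1 - (1 + j) = m + 1 := by omega
  have e2 : 1 + j + m - j = m + 1 := by omega
  have e3 : 1 + j + m - (1 + j) = m := by omega
  have e4 : 1 + j - 1 = j := by omega
  rw [e4, e2, e1, e3]
  have hA := qq_ne_zero hq1 (1+j+m)
  have hB := qq_ne_zero hq1 (1+j)
  have hC := qq_ne_zero hq1 (m+1)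
  have hD := qq_ne_zero hq1 j
  have hE := qq_ne_zero hq1 m
  have r1 : qPoch q q (1+j+m+1) = qPoch q q (1+j+m) * (1 - q * q ^ (1+j+m)) := qPoch_succ q q _
  have r2 : qPoch q q (1+j) = qPoch q q j * (1 - q * q ^ j) := by rw [Nat.add_comm]; exact qPoch_succ q q j
  have r3 : qPoch q q (m+1) = qPoch q q m * (1 - q * q ^ m) := qPoch_succ q q m
  rw [r1]
  field_simp
  rw [r2, r3]
  ring_nf

lemma Dq_step (q : ℂ) (f : ℂ → ℂ) (i : ℕ) {x : ℂ} (hx : x ≠ 0) :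
    (Dq q)^[i] f x - (Dq q)^[i] f (q * x) = x * (Dq q)^[i+1] f x := by
  rw [Function.iterate_succ_apply']
  simp only [Dq]
  field_simp

lemma qBinom_sum_split {q : ℂ} (hq1 : ‖q‖ < 1) (k : ℕ) (u : ℕ → ℂ) :
    ∑ i ∈ Finset.range (k+2), qBinom q (k+1) i * u i
      = ∑ i ∈ Finset.range (k+1), qBinom q k i * u (i+1)
      + ∑ i ∈ Finset.range (k+1), q ^ i * qBinom q k i * u i := by
  rw [Finset.sum_range_succ' (fun i => qBinom q (k+1) i * u i) (k+1)]
  rw [Finset.sum_range_succ (fun i => qBinom q (k+1) (i+1) * u (i+1)) k]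
  rw [Finset.sum_range_succ (fun i => qBinom q k i * u (i+1)) k]
  rw [Finset.sum_range_succ' (fun i => q ^ i * qBinom q k i * u i) k]
  have hp : ∀ i ∈ Finset.range k, qBinom q (k+1) (i+1) * u (i+1)
      = qBinom q k i * u (i+1) + q ^ (i+1) * qBinom q k (i+1) * u (i+1) := by
    intro i hi
    have hik := Finset.mem_range.mp hi
    have := qBinom_pascal hq1 k (i+1) (by omega) (by omega)
    simp only [Nat.add_sub_cancel] at this
    rw [this]; ring
  rw [Finset.sum_congr rfl hp, Finset.sum_add_distrib]
  rw [qBinom_self hq1, qBinom_self hq1, qBinom_zero hq1, qBinom_zero hq1]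
  ring

lemma Dq_leibniz {q : ℂ} (hq1 : ‖q‖ < 1) (hq : q ≠ 0) (f g : ℂ → ℂ) (k : ℕ) :
    ∀ x : ℂ, x ≠ 0 → (Dq q)^[k] (fun t => f t * g t) x
      = ∑ i ∈ Finset.range (k+1),
          qBinom q k i * ((Dq q)^[i] f x * (Dq q)^[k-i] g (q ^ i * x)) := by
  induction k with
  | zero =>
    intro x hx
    simp [qBinom_zero hq1]
  | succ k ih =>
    intro x hx
    have hqx : q * x ≠ 0 := mul_ne_zero hq hx
    rw [Function.iterate_succ_apply']
    show ((Dq q)^[k] (fun t => f t * g t) x - (Dq q)^[k] (fun t => f t * g t) (q * x)) / x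
        = _
    rw [ih x hx, ih (q*x) hqx, div_eq_iff hx]
    -- rewrite each difference
    have key : ∀ i ∈ Finset.range (k+1),
        qBinom q k i * ((Dq q)^[i] f x * (Dq q)^[k-i] g (q ^ i * x))
          - qBinom q k i * ((Dq q)^[i] f (q*x) * (Dq q)^[k-i] g (q ^ i * (q*x)))
        = qBinom q k i * (x * (Dq q)^[i+1] f x) * (Dq q)^[k-i] g (q ^ (i+1) * x)
          + qBinom q k i * (Dq q)^[i] f x * (q ^ i * (x * (Dq q)^[k-i+1] g (q ^ i * x))) := by
      intro i _
      have h1 : (Dq q)^[i] f x - (Dq q)^[i] f (q * x) = x * (Dq q)^[i+1] f x := Dq_step q f i hx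
      have hqix : q ^ i * x ≠ 0 := mul_ne_zero (pow_ne_zero i hq) hx
      have h2 : (Dq q)^[k-i] g (q ^ i * x) - (Dq q)^[k-i] g (q * (q ^ i * x))
          = (q ^ i * x) * (Dq q)^[k-i+1] g (q ^ i * x) := Dq_step q g (k-i) hqix
      have e1 : q ^ i * (q * x) = q * (q ^ i * x) := by ring
      have e2 : q ^ (i+1) * x = q * (q ^ i * x) := by ring
      rw [e1, e2]
      linear_combination qBinom q k i * (Dq q)^[k-i] g (q * (q^i*x)) * h1
        + qBinom q k i * (Dq q)^[i] f x * h2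
    rw [← Finset.sum_sub_distrib, Finset.sum_congr rfl key, Finset.sum_add_distrib,
      Finset.sum_mul]
    have rhseq : ∑ i ∈ Finset.range (k+1+1),
        qBinom q (k+1) i * ((Dq q)^[i] f x * (Dq q)^[k+1-i] g (q ^ i * x)) * x
        = ∑ i ∈ Finset.range (k+2),
          qBinom q (k+1) i * ((Dq q)^[i] f x * (Dq q)^[k+1-i] g (q ^ i * x) * x) :=
      Finset.sum_congr rfl fun i _ => by ring
    rw [rhseq, qBinom_sum_split hq1 k (fun i => (Dq q)^[i] f x * (Dq q)^[k+1-i] g (q ^ i * x) * x)]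
    congr 1
    · refine Finset.sum_congr rfl fun i _ => ?_
      simp only [Nat.succ_sub_succ]
      ring
    · refine Finset.sum_congr rfl fun i hi => ?_
      have : k + 1 - i = (k - i) + 1 := by
        have := Finset.mem_range.mp hi; omega
      rw [this]
      ring

lemma Dq_pow_qPoch {q : ℂ} (hq1 : ‖q‖ < 1) (hq : q ≠ 0) (a : ℂ) (n : ℕ) :
    ∀ k ≤ n, ∀ x : ℂ, x ≠ 0 → (Dq q)^[k] (fun t => qPoch q (a * t) n) x
      = (-a) ^ k * q ^ (k.choose 2) * (qPoch q q n / qPoch q q (n-k))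
          * qPoch q (a * q ^ k * x) (n-k) := by
  intro k
  induction k with
  | zero =>
    intro _ x _
    simp [div_self (qq_ne_zero hq1 n)]
  | succ k ih =>
    intro hkn x hx
    have hk : k ≤ n := by omega
    have hqx : q * x ≠ 0 := mul_ne_zero hq hx
    rw [Function.iterate_succ_apply']
    show ((Dq q)^[k] (fun t => qPoch q (a * t) n) x
        - (Dq q)^[k] (fun t => qPoch q (a * t) n) (q * x)) / x = _
    rw [ih hk x hx, ih hk (q*x) hqx, div_eq_iff hx]
    obtain ⟨m, hm⟩ : ∃ m, n - k = m + 1 := ⟨n - k - 1, by omega⟩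
    have hm' : n - (k+1) = m := by omega
    rw [hm, hm']
    have r1 : qPoch q (a * q ^ k * x) (m+1) = (1 - a * q ^ k * x) * qPoch q (a * q ^ k * x * q) m :=
      qPoch_succ' q _ m
    have r2 : qPoch q (a * q ^ k * (q * x)) (m+1)
        = qPoch q (a * q ^ k * (q * x)) m * (1 - a * q ^ k * (q * x) * q ^ m) :=
      qPoch_succ q _ m
    have e1 : qPoch q (a * q ^ k * x * q) m = qPoch q (a * q ^ (k+1) * x) m := by
      congr 1; ring
    have e2 : qPoch q (a * q ^ k * (q * x)) m = qPoch q (a * q ^ (k+1) * x) m := by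
      congr 1; ring
    have r3 : qPoch q q (m+1) = qPoch q q m * (1 - q * q ^ m) := qPoch_succ q q m
    rw [r1, r2, e1, e2, r3]
    have hqqm : qPoch q q m ≠ 0 := qq_ne_zero hq1 m
    have hfac : (1 : ℂ) - q * q ^ m ≠ 0 := by
      have := qq_ne_zero hq1 (m+1)
      rw [r3] at this
      exact right_ne_zero_of_mul this
    have hc2 : (k+1).choose 2 = k.choose 2 + k := choose2_succ k
    rw [hc2]
    field_simp
    ring_nf

lemma Dq_pow_inv_qPoch {q : ℂ} (hq1 : ‖q‖ < 1) (hq : q ≠ 0) (c : ℂ) (n : ℕ) :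
    ∀ k : ℕ, ∀ x : ℂ, x ≠ 0 → (∀ j < n + k, 1 - c * q ^ j * x ≠ 0) →
      (Dq q)^[k] (fun t => 1 / qPoch q (c * t) n) x
        = c ^ k * qPoch q (q ^ n) k / qPoch q (c * x) (n + k) := by
  intro k
  induction k with
  | zero =>
    intro x _ _
    simp [qPoch_zero]
  | succ k ih =>
    intro x hx hcx
    have hqx : q * x ≠ 0 := mul_ne_zero hq hx
    have hcx' : ∀ j < n + k, 1 - c * q ^ j * x ≠ 0 := fun j hj => hcx j (by omega)
    have hcqx : ∀ j < n + k, 1 - c * q ^ j * (q * x) ≠ 0 := by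
      intro j hj
      have := hcx (j+1) (by omega)
      intro h; apply this; rw [← h]; ring_nf
    rw [Function.iterate_succ_apply']
    show ((Dq q)^[k] (fun t => 1 / qPoch q (c * t) n) x
        - (Dq q)^[k] (fun t => 1 / qPoch q (c * t) n) (q * x)) / x = _
    rw [ih x hx hcx', ih (q*x) hqx hcqx, div_eq_iff hx]
    have conv : ∀ (y : ℂ) (m : ℕ), (∀ j < m, 1 - c * q ^ j * y ≠ 0) →
        qPoch q (c * y) m ≠ 0 := by
      intro y m h
      apply qPoch_ne_zero
      intro j hj
      have := h j hj
      intro he; apply this; rw [← he]; ring_nf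
    have hBB : qPoch q (c * (q * x)) (n + k) = qPoch q (c * q * x) (n + k) := by
      congr 1; ring
    have hA : qPoch q (c * x) (n + k) ≠ 0 := conv x (n+k) hcx'
    have hB : qPoch q (c * q * x) (n + k) ≠ 0 := hBB ▸ conv (q*x) (n+k) hcqx
    have hP : qPoch q (c * x) (n + k + 1) ≠ 0 := conv x (n+k+1) (fun j hj => hcx j (by omega))
    have h1 : qPoch q (c * x) (n + k + 1)
        = qPoch q (c * x) (n + k) * (1 - c * x * (q ^ n * q ^ k)) := by
      rw [qPoch_succ q _ _, pow_add]
    have h2 : qPoch q (c * x) (n + k + 1)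
        = (1 - c * x) * qPoch q (c * q * x) (n + k) := by
      rw [qPoch_succ' q (c*x) (n+k)]
      congr 2
      ring
    have h3 : qPoch q (q ^ n) (k + 1) = qPoch q (q ^ n) k * (1 - q ^ n * q ^ k) :=
      qPoch_succ q _ _
    have goal2 : qPoch q (c * x) (n + (k+1)) = qPoch q (c * x) (n + k + 1) := by congr 1
    rw [h3, hBB, goal2]
    set A := qPoch q (c * x) (n + k) with hAdef
    set B := qPoch q (c * q * x) (n + k) with hBdef
    set P := qPoch q (c * x) (n + k + 1) with hPdef
    set K := qPoch q (q ^ n) k with hKdef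
    have h12 : A * (1 - c * x * (q ^ n * q ^ k)) = (1 - c * x) * B := by rw [← h1, h2]
    field_simp
    rw [h2]
    linear_combination (-(c^k) * K * B) * h12

lemma qPoch_mul_ne_zero {q c x : ℂ} {m : ℕ} (h : ∀ j < m, 1 - c * q ^ j * x ≠ 0) :
    qPoch q (c * x) m ≠ 0 := by
  apply qPoch_ne_zero
  intro j hj
  have := h j hj
  intro he; apply this; rw [← he]; ring_nf

lemma eqJ {q a b x : ℂ} (hq1 : ‖q‖ < 1) (hq : q ≠ 0) (hx : x ≠ 0)
    {k n i : ℕ} (hik : i ≤ k) (hkn : k ≤ n)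
    (ha : ∀ j : ℕ, j < k → 1 - a * q ^ j * x ≠ 0)
    (hb : ∀ j : ℕ, j < k → 1 - b * q ^ j * x ≠ 0) :
    ∑ j ∈ Finset.range (i+1),
      qBinom q i j * ((Dq q)^[j] (fun t => qPoch q (a*t) n) x
        * (Dq q)^[i-j] (fun t => qPoch q (b*t) n) (q ^ j * x))
    = qPoch q q n ^ 2 * qPoch q (a*x) n * qPoch q (b*x) n * (q ^ (i.choose 2) / qPoch q (b*x) i)
      * ∑ j ∈ Finset.range (i + 1),
          qBinom q i j * q ^ ((j : ℤ) * ((j : ℤ) - (i : ℤ))) * (-a) ^ j * (-b) ^ (i - j) *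
            qPoch q (b * q ^ n * x) j /
            (qPoch q q (n - j) * qPoch q q (n - i + j) * qPoch q (a * x) j) := by
  rw [Finset.mul_sum]
  refine Finset.sum_congr rfl fun j hj => ?_
  have hji : j ≤ i := by have := Finset.mem_range.mp hj; omega
  have hjn : j ≤ n := by omega
  have hijn : i - j ≤ n := by omega
  have hqjx : q ^ j * x ≠ 0 := mul_ne_zero (pow_ne_zero j hq) hx
  rw [Dq_pow_qPoch hq1 hq a n j hjn x hx,
      Dq_pow_qPoch hq1 hq b n (i-j) hijn (q ^ j * x) hqjx]
  -- normalize the b-pochhammer argument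
  have hpq : q ^ (i-j) * q ^ j = q ^ i := by rw [← pow_add]; congr 1; omega
  have ebarg : b * q ^ (i-j) * (q ^ j * x) = b * q ^ i * x := by
    calc b * q ^ (i-j) * (q ^ j * x) = b * (q ^ (i-j) * q ^ j) * x := by ring
    _ = b * q ^ i * x := by rw [hpq]
  have hsub : n - (i - j) = n - i + j := by omega
  rw [ebarg, hsub]
  -- pochhammer product identities
  have pA : qPoch q (a*x) n = qPoch q (a*x) j * qPoch q (a * q ^ j * x) (n - j) := by
    have := qPoch_add q (a*x) j (n-j)
    rw [show j + (n-j) = n by omega] at this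
    rw [this]
    congr 2
    ring
  have pB : qPoch q (b*x) i * qPoch q (b * q ^ i * x) (n - i + j)
      = qPoch q (b*x) n * qPoch q (b * q ^ n * x) j := by
    have h1 := qPoch_add q (b*x) i (n-i+j)
    rw [show i + (n-i+j) = n + j by omega] at h1
    have h2 := qPoch_add q (b*x) n j
    rw [show b*x*q^i = b*q^i*x from by ring] at h1
    rw [show b*x*q^n = b*q^n*x from by ring] at h2
    rw [← h1, ← h2]
  -- exponent identities
  have hch : i.choose 2 = j.choose 2 + (i-j).choose 2 + j * (i-j) := by
    have := choose2_add j (i-j)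
    rw [show j + (i-j) = i by omega] at this
    omega
  have hz : (q : ℂ) ^ ((j : ℤ) * ((j : ℤ) - (i : ℤ))) = (q ^ (j * (i-j)))⁻¹ := by
    have hcast : ((j * (i-j) : ℕ) : ℤ) = (j : ℤ) * ((i : ℤ) - (j : ℤ)) := by
      push_cast [Nat.cast_sub hji]
      ring
    have he : (j : ℤ) * ((j : ℤ) - (i : ℤ)) = -((j * (i-j) : ℕ) : ℤ) := by
      rw [hcast]; ring
    rw [he, zpow_neg, zpow_natCast]
  rw [hch, pow_add, pow_add]
  -- nonvanishing
  have hQ1 : qPoch q q (n - j) ≠ 0 := qq_ne_zero hq1 _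
  have hQ2 : qPoch q q (n - i + j) ≠ 0 := qq_ne_zero hq1 _
  have hax : qPoch q (a*x) j ≠ 0 := qPoch_mul_ne_zero (fun m hm => ha m (by omega))
  have hbx : qPoch q (b*x) i ≠ 0 := qPoch_mul_ne_zero (fun m hm => hb m (by omega))
  have hqp : (q : ℂ) ^ (j * (i-j)) ≠ 0 := pow_ne_zero _ hq
  rw [pA]
  set QA := qPoch q (a*x) j with hQA
  set QAn := qPoch q (a * q ^ j * x) (n-j) with hQAn
  set QBi := qPoch q (b*x) i with hQBi
  set QBn := qPoch q (b*x) n with hQBn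
  set QBq := qPoch q (b * q ^ n * x) j with hQBq
  set QBm := qPoch q (b * q ^ i * x) (n-i+j) with hQBm
  set S1 := qPoch q q (n-j) with hS1
  set S2 := qPoch q q (n-i+j) with hS2
  set Qn := qPoch q q n with hQn
  set Bin := qBinom q i j with hBin
  set e1 := j.choose 2 with he1
  set e2 := (i-j).choose 2 with he2
  set e3 := j * (i-j) with he3
  set Z := (q : ℂ) ^ ((j : ℤ) * ((j : ℤ) - (i : ℤ))) with hZ
  have hz2 : Z * q ^ e3 = 1 := by
    rw [hZ, he3, ← zpow_natCast q (j * (i-j)), ← zpow_add₀ hq]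
    have he : (j : ℤ) * ((j : ℤ) - (i : ℤ)) + ((j * (i-j) : ℕ) : ℤ) = 0 := by
      push_cast [Nat.cast_sub hji]
      ring
    rw [he, zpow_zero]
  field_simp
  linear_combination (Bin * (-a)^j * (-b)^(i-j) * Qn^2 * QAn) * pB
    - (Bin * (-a)^j * (-b)^(i-j) * Qn^2 * QAn * QBn * QBq) * hz2

lemma eqL {q c d x : ℂ} (hq1 : ‖q‖ < 1) (hq : q ≠ 0) (hx : x ≠ 0)
    {k n i : ℕ} (hik : i ≤ k)
    (hc : ∀ j : ℕ, j < n + k → 1 - c * q ^ j * x ≠ 0)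
    (hd : ∀ j : ℕ, j < n + k → 1 - d * q ^ j * x ≠ 0) :
    ∑ l ∈ Finset.range (k - i + 1),
      qBinom q (k-i) l * ((Dq q)^[l] (fun t => 1 / qPoch q (c*t) n) (q ^ i * x)
        * (Dq q)^[k-i-l] (fun t => 1 / qPoch q (d*t) n) (q ^ l * (q ^ i * x)))
    = (1 / (qPoch q (c * q ^ i * x) n * qPoch q (d * q ^ i * x) n *
        qPoch q (d * q ^ (n + i) * x) (k - i))) *
      ∑ l ∈ Finset.range (k - i + 1),
        qBinom q (k - i) l * qPoch q (q ^ n) l * qPoch q (q ^ n) (k - i - l) *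
          qPoch q (d * q ^ i * x) l * c ^ l * d ^ (k - i - l) /
          qPoch q (c * q ^ (n + i) * x) l := by
  rw [Finset.mul_sum]
  refine Finset.sum_congr rfl fun l hl => ?_
  have hlk : l ≤ k - i := by have := Finset.mem_range.mp hl; omega
  have hqix : q ^ i * x ≠ 0 := mul_ne_zero (pow_ne_zero i hq) hx
  have hqlix : q ^ l * (q ^ i * x) ≠ 0 := mul_ne_zero (pow_ne_zero l hq) hqix
  have hcix : ∀ j : ℕ, j < n + l → 1 - c * q ^ j * (q ^ i * x) ≠ 0 := by
    intro j hj
    have := hc (j + i) (by omega)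
    intro he; apply this; rw [← he]; rw [pow_add]; ring
  have hdlix : ∀ j : ℕ, j < n + (k - i - l) → 1 - d * q ^ j * (q ^ l * (q ^ i * x)) ≠ 0 := by
    intro j hj
    have := hd (j + l + i) (by omega)
    intro he; apply this; rw [← he]; rw [pow_add, pow_add]; ring
  rw [Dq_pow_inv_qPoch hq1 hq c n l (q ^ i * x) hqix hcix,
      Dq_pow_inv_qPoch hq1 hq d n (k-i-l) (q ^ l * (q ^ i * x)) hqlix hdlix]
  -- normalize pochhammer arguments
  have ec : qPoch q (c * (q ^ i * x)) (n + l) = qPoch q (c * q ^ i * x) (n + l) := by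
    rw [show c * (q ^ i * x) = c * q ^ i * x from by ring]
  have ed : qPoch q (d * (q ^ l * (q ^ i * x))) (n + (k - i - l))
      = qPoch q (d * q ^ (l + i) * x) (n + (k - i - l)) := by
    rw [show d * (q ^ l * (q ^ i * x)) = d * q ^ (l + i) * x from by rw [pow_add]; ring]
  rw [ec, ed]
  -- product identities
  have pC : qPoch q (c * q ^ i * x) (n + l)
      = qPoch q (c * q ^ i * x) n * qPoch q (c * q ^ (n + i) * x) l := by
    have h1 := qPoch_add q (c * q ^ i * x) n l
    rw [show c * q ^ i * x * q ^ n = c * q ^ (n + i) * x from by rw [pow_add]; ring] at h1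
    exact h1
  have pD : qPoch q (d * q ^ i * x) l * qPoch q (d * q ^ (l + i) * x) (n + (k - i - l))
      = qPoch q (d * q ^ i * x) n * qPoch q (d * q ^ (n + i) * x) (k - i) := by
    have h1 := qPoch_add q (d * q ^ i * x) l (n + (k - i - l))
    rw [show l + (n + (k - i - l)) = n + (k - i) from by omega] at h1
    rw [show d * q ^ i * x * q ^ l = d * q ^ (l + i) * x from by rw [pow_add]; ring] at h1
    have h2 := qPoch_add q (d * q ^ i * x) n (k - i)
    rw [show d * q ^ i * x * q ^ n = d * q ^ (n + i) * x from by rw [pow_add]; ring] at h2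
    rw [← h1, ← h2]
  -- nonvanishing
  have hCn : qPoch q (c * q ^ i * x) n ≠ 0 := by
    apply qPoch_ne_zero; intro j hj
    have := hc (j + i) (by omega)
    intro he; apply this; rw [← he, pow_add]; ring
  have hCl : qPoch q (c * q ^ (n + i) * x) l ≠ 0 := by
    apply qPoch_ne_zero; intro j hj
    have := hc (j + (n + i)) (by omega)
    intro he; apply this; rw [← he, pow_add]; ring
  have hDn : qPoch q (d * q ^ i * x) n ≠ 0 := by
    apply qPoch_ne_zero; intro j hj
    have := hd (j + i) (by omega)
    intro he; apply this; rw [← he, pow_add]; ring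
  have hDk : qPoch q (d * q ^ (n + i) * x) (k - i) ≠ 0 := by
    apply qPoch_ne_zero; intro j hj
    have := hd (j + (n + i)) (by omega)
    intro he; apply this; rw [← he, pow_add]; ring
  have hDl : qPoch q (d * q ^ i * x) l ≠ 0 := by
    apply qPoch_ne_zero; intro j hj
    have := hd (j + i) (by omega)
    intro he; apply this; rw [← he, pow_add]; ring
  have hB4ne : qPoch q (d * q ^ (l + i) * x) (n + (k - i - l)) ≠ 0 := by
    apply qPoch_ne_zero; intro j hj
    have := hd (j + (l + i)) (by omega)
    intro he; apply this; rw [← he, pow_add]; ring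
  rw [pC]
  set A1 := qPoch q (c * q ^ i * x) n with hA1
  set A2 := qPoch q (c * q ^ (n + i) * x) l with hA2
  set B1 := qPoch q (d * q ^ i * x) n with hB1
  set B2 := qPoch q (d * q ^ (n + i) * x) (k - i) with hB2
  set B3 := qPoch q (d * q ^ i * x) l with hB3
  set B4 := qPoch q (d * q ^ (l + i) * x) (n + (k - i - l)) with hB4
  set K1 := qPoch q (q ^ n) l with hK1
  set K2 := qPoch q (q ^ n) (k - i - l) with hK2
  set Bin := qBinom q (k-i) l with hBin
  field_simp
  linear_combination (-(Bin * c ^ l * d ^ (k - i - l) * K1 * K2)) * pD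

theorem stmt5 (q a b c d x : ℂ) (hq0 : 0 < ‖q‖) (hq1 : ‖q‖ < 1)
    (hx : x ≠ 0) (k n : ℕ) (hkn : k ≤ n)
    (ha : ∀ j : ℕ, j < k → 1 - a * q ^ j * x ≠ 0)
    (hb : ∀ j : ℕ, j < k → 1 - b * q ^ j * x ≠ 0)
    (hc : ∀ j : ℕ, j < n + k → 1 - c * q ^ j * x ≠ 0)
    (hd : ∀ j : ℕ, j < n + k → 1 - d * q ^ j * x ≠ 0) :
    (Dq q)^[k]
        (fun t => qPoch q (a * t) n * qPoch q (b * t) n /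
          (qPoch q (c * t) n * qPoch q (d * t) n)) x =
      qPoch q q n ^ 2 * qPoch q (a * x) n * qPoch q (b * x) n *
        ∑ i ∈ Finset.range (k + 1),
          qBinom q k i * (q ^ (i.choose 2) / qPoch q (b * x) i) *
            (∑ j ∈ Finset.range (i + 1),
              qBinom q i j * q ^ ((j : ℤ) * ((j : ℤ) - (i : ℤ))) * (-a) ^ j * (-b) ^ (i - j) *
                qPoch q (b * q ^ n * x) j /
                (qPoch q q (n - j) * qPoch q q (n - i + j) * qPoch q (a * x) j)) *
            (1 / (qPoch q (c * q ^ i * x) n * qPoch q (d * q ^ i * x) n *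
              qPoch q (d * q ^ (n + i) * x) (k - i))) *
            ∑ l ∈ Finset.range (k - i + 1),
              qBinom q (k - i) l * qPoch q (q ^ n) l * qPoch q (q ^ n) (k - i - l) *
                qPoch q (d * q ^ i * x) l * c ^ l * d ^ (k - i - l) /
                qPoch q (c * q ^ (n + i) * x) l := by
  have hq : q ≠ 0 := by
    intro h; rw [h] at hq0; simp at hq0
  have hfun : (fun t => qPoch q (a * t) n * qPoch q (b * t) n /
        (qPoch q (c * t) n * qPoch q (d * t) n))
      = fun t => (qPoch q (a * t) n * qPoch q (b * t) n) *
          ((1 / qPoch q (c * t) n) * (1 / qPoch q (d * t) n)) := by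
    funext t
    rw [div_eq_mul_inv, mul_inv, one_div, one_div]
  rw [hfun]
  rw [Dq_leibniz hq1 hq (fun t => qPoch q (a * t) n * qPoch q (b * t) n)
      (fun t => (1 / qPoch q (c * t) n) * (1 / qPoch q (d * t) n)) k x hx]
  rw [Finset.mul_sum]
  refine Finset.sum_congr rfl fun i hi => ?_
  have hik : i ≤ k := by have := Finset.mem_range.mp hi; omega
  have hqix : q ^ i * x ≠ 0 := mul_ne_zero (pow_ne_zero i hq) hx
  rw [Dq_leibniz hq1 hq (fun t => qPoch q (a * t) n) (fun t => qPoch q (b * t) n) i x hx]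
  rw [Dq_leibniz hq1 hq (fun t => 1 / qPoch q (c * t) n) (fun t => 1 / qPoch q (d * t) n)
      (k - i) (q ^ i * x) hqix]
  rw [eqJ hq1 hq hx hik hkn ha hb, eqL hq1 hq hx hik hc hd]
  ring
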